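/- For all real x, the formal power series identity e^{W(q)x}/(1-W(q)) = \sum_{n=0}^{\infty} (n+x)^n q^n/n! holds, where W(q) = \sum_{n=1}^{\infty} n^{n-1} q^n/n! is the tree function. -/

import Mathlib

open PowerSeries Finset
open Polynomial

/-- The tree function `W(q) = ∑_{n≥1} n^{n-1} q^n / n!`. -/
noncomputable def treeW (K : Type*) [Field K] : PowerSeries K :=
  PowerSeries.mk fun n => if n = 0 then 0 else (n : K) ^ (n - 1) / (n.factorial : K)

/-- Formal exponential of a power series with zero constant term. -/
noncomputable def pexp {K : Type*} [Field K] (f : PowerSeries K) : PowerSeries K :=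
  PowerSeries.mk fun n => ∑ k ∈ Finset.range (n + 1), PowerSeries.coeff n (f ^ k) / (k.factorial : K)

noncomputable def Tsum (m : ℕ) (z : ℝ) (j : ℕ) : ℝ :=
  ∑ k ∈ Finset.range (m+1), (-1:ℝ)^k * (m.choose k : ℝ) * (z + k)^j

lemma Tsplit (m j : ℕ) (z : ℝ) : Tsum (m+1) z j = Tsum m z j - Tsum m (z+1) j := by
  unfold Tsum
  rw [Finset.sum_range_succ' (fun k => (-1:ℝ)^k * ((m+1).choose k : ℝ) * (z + k)^j) (m+1),
      Finset.sum_range_succ' (fun k => (-1:ℝ)^k * ((m).choose k : ℝ) * (z + k)^j) m]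
  simp only [Nat.choose_succ_succ, Nat.cast_add, Nat.choose_zero_right, Nat.cast_one,
    Nat.cast_zero, add_zero, one_mul, pow_succ]
  have e1 : ∀ x:ℕ, (-1:ℝ)^x * -1 * ((m.choose x : ℝ) + (m.choose x.succ : ℝ)) * (z + ((x:ℝ) + 1)) ^ j
      = (-1:ℝ)^x * -1 * (m.choose (x+1) : ℝ) * (z + ((x:ℝ) + 1)) ^ j
        + (-((-1:ℝ)^x * (m.choose x : ℝ) * (z + 1 + (x:ℝ)) ^ j)) := by
    intro x
    have : z + ((x:ℝ)+1) = z + 1 + (x:ℝ) := by ring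
    rw [Nat.succ_eq_add_one, this]; ring
  rw [Finset.sum_congr rfl (fun x _ => e1 x), Finset.sum_add_distrib, Finset.sum_neg_distrib]
  rw [Finset.sum_range_succ (fun x => (-1:ℝ)^x * -1 * (m.choose (x+1) : ℝ) * (z + ((x:ℝ) + 1)) ^ j) m]
  simp [Nat.choose_succ_self]
  ring

lemma Tzero : ∀ m j, j < m → ∀ z : ℝ, Tsum m z j = 0 := by
  intro m
  induction m with
  | zero => intro j hj; omega
  | succ m ih =>
    have hconst : ∀ z : ℝ, Tsum m z m = Tsum m 0 m := by
      intro z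
      have step : Tsum m z m = ∑ i ∈ range (m+1), z^i * (m.choose i : ℝ) * Tsum m 0 (m-i) := by
        have e1 : Tsum m z m = ∑ k ∈ range (m+1), ∑ i ∈ range (m+1),
            z^i * (m.choose i:ℝ) * ((-1:ℝ)^k * (m.choose k:ℝ) * (0+(k:ℝ))^(m-i)) := by
          simp only [Tsum]
          refine Finset.sum_congr rfl fun k _ => ?_
          rw [add_pow, Finset.mul_sum]
          refine Finset.sum_congr rfl fun i _ => ?_
          simp only [zero_add]; ring
        rw [e1, Finset.sum_comm]
        refine Finset.sum_congr rfl fun i _ => ?_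
        simp only [Tsum, Finset.mul_sum]
      rw [step, Finset.sum_eq_single_of_mem 0 (Finset.mem_range.2 (Nat.succ_pos m))]
      · simp
      · intro i hi hne
        rw [ih (m - i) (by simp at hi; omega), mul_zero]
    intro j hj z
    rw [Tsplit]
    rcases Nat.lt_or_ge j m with h | h
    · rw [ih j h, ih j h, sub_self]
    · have hjm : j = m := by omega
      rw [hjm, hconst z, hconst (z+1), sub_self]

noncomputable def abelA (k : ℕ) (x : ℝ) : ℝ := if k = 0 then 1 else x * (x + k)^(k-1)

lemma Ppoly (x : ℝ) : ∀ n : ℕ, ∀ z : ℝ,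
    (∑ k ∈ range (n+1), Polynomial.C ((n.choose k : ℝ) * abelA k x) *
      (Polynomial.X + Polynomial.C (z + ((n-k : ℕ):ℝ)))^(n-k) : Polynomial ℝ)
    = (Polynomial.X + Polynomial.C (x + z + n))^n := by
  intro n
  induction n with
  | zero => intro z; simp [abelA]
  | succ n ih =>
    intro z
    set L : Polynomial ℝ := ∑ k ∈ range (n+1+1), Polynomial.C (((n+1).choose k : ℝ) * abelA k x) *
      (Polynomial.X + Polynomial.C (z + ((n+1-k : ℕ):ℝ)))^(n+1-k) with hL
    set R : Polynomial ℝ := (Polynomial.X + Polynomial.C (x + z + ((n+1:ℕ):ℝ)))^(n+1) with hR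
    have hder : derivative (L - R) = 0 := by
      have hdL : derivative L = Polynomial.C ((n+1:ℝ)) * (Polynomial.X + Polynomial.C (x + (z+1) + n))^n := by
        rw [hL, derivative_sum, Finset.sum_range_succ]
        simp only [derivative_C_mul, Polynomial.derivative_pow, derivative_X_add_C, Nat.sub_self,
          Nat.cast_zero, Polynomial.C_0, zero_mul, mul_one, mul_zero, add_zero]
        rw [← ih (z+1), Finset.mul_sum]
        refine Finset.sum_congr rfl fun k hk => ?_
        have hk' : k ≤ n := by simpa [Nat.lt_succ_iff] using hk
        have h1 : n+1-k-1 = n-k := by omega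
        have h2 : z + ((n+1-k : ℕ):ℝ) = (z+1) + ((n-k : ℕ):ℝ) := by
          rw [Nat.cast_sub (by omega), Nat.cast_sub hk']; push_cast; ring
        have h3' : (n+1-k) * ((n+1).choose k) = (n+1) * n.choose k :=
          calc (n+1-k) * ((n+1).choose k) = (n+1).choose k * (n+1-k) := Nat.mul_comm _ _
            _ = n.choose k * (n+1) := (Nat.choose_mul_succ_eq n k).symm
            _ = (n+1) * n.choose k := Nat.mul_comm _ _
        have h3 : ((n+1-k : ℕ):ℝ) * ((n+1).choose k : ℝ) = ((n:ℝ)+1) * (n.choose k : ℝ) := by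
          have := congrArg (Nat.cast (R := ℝ)) h3'
          push_cast at this
          rw [Nat.cast_sub (by omega : k ≤ n+1)] at this ⊢
          linarith [this]
        rw [h1, h2]
        calc Polynomial.C (((n+1).choose k : ℝ) * abelA k x) *
              (Polynomial.C ((n+1-k : ℕ):ℝ) * (Polynomial.X + Polynomial.C ((z+1) + ((n-k:ℕ):ℝ)))^(n-k))
            = Polynomial.C ((((n+1-k : ℕ):ℝ) * ((n+1).choose k : ℝ)) * abelA k x) *
              (Polynomial.X + Polynomial.C ((z+1) + ((n-k:ℕ):ℝ)))^(n-k) := by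
              simp only [Polynomial.C_mul]; ring
          _ = Polynomial.C ((((n:ℝ)+1) * (n.choose k : ℝ)) * abelA k x) *
              (Polynomial.X + Polynomial.C ((z+1) + ((n-k:ℕ):ℝ)))^(n-k) := by rw [h3]
          _ = Polynomial.C ((n:ℝ)+1) * (Polynomial.C ((n.choose k : ℝ) * abelA k x) *
              (Polynomial.X + Polynomial.C ((z+1) + ((n-k:ℕ):ℝ)))^(n-k)) := by
              simp only [Polynomial.C_mul]; ring
      have hdR : derivative R = Polynomial.C ((n+1:ℝ)) * (Polynomial.X + Polynomial.C (x + (z+1) + n))^n := by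
        rw [hR, Polynomial.derivative_pow, derivative_X_add_C]
        have h4 : x + z + ((n+1:ℕ):ℝ) = x + (z+1) + n := by push_cast; ring
        rw [h4, mul_one, Nat.add_sub_cancel]
        push_cast
        ring
      rw [map_sub, hdL, hdR, sub_self]
    have hdeg : L - R = Polynomial.C ((L-R).coeff 0) :=
      Polynomial.eq_C_of_natDegree_eq_zero (Polynomial.natDegree_eq_zero_of_derivative_eq_zero hder)
    have heval : (L - R).eval (-(x + z + ((n+1:ℕ):ℝ))) = 0 := by
      rw [eval_sub, hR]
      have hRz : ((Polynomial.X + Polynomial.C (x + z + ((n+1:ℕ):ℝ)))^(n+1)).eval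
          (-(x + z + ((n+1:ℕ):ℝ))) = 0 := by
        rw [eval_pow, eval_add, eval_X, eval_C, neg_add_cancel, zero_pow (by omega : n+1 ≠ 0)]
      rw [hL, hRz, sub_zero]
      simp only [eval_finset_sum, eval_mul, eval_pow, eval_add, eval_X, eval_C]
      have hterm : ∀ k ∈ range (n+1+1), (((n+1).choose k : ℝ) * abelA k x) *
          (-(x + z + ((n+1:ℕ):ℝ)) + (z + ((n+1-k : ℕ):ℝ)))^(n+1-k)
          = ((-1:ℝ)^(n+1) * x) * ((-1:ℝ)^k * ((n+1).choose k : ℝ) * (x + (k:ℝ))^n) := by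
        intro k hk
        have hk' : k ≤ n+1 := by simpa [Nat.lt_succ_iff] using hk
        have hbase : (-(x + z + ((n+1:ℕ):ℝ)) + (z + ((n+1-k : ℕ):ℝ))) = -(x + (k:ℝ)) := by
          rw [Nat.cast_sub hk']; push_cast; ring
        rw [hbase, neg_pow]
        have hsign : (-1:ℝ)^(n+1-k) = (-1:ℝ)^(n+1) * (-1:ℝ)^k := by
          have h6 : (-1:ℝ)^(k+k) = 1 := by
            rw [← two_mul, pow_mul]; norm_num
          have h7 : (-1:ℝ)^(n+1-k) = (-1:ℝ)^(n+1-k) * (-1:ℝ)^(k+k) := by rw [h6, mul_one]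
          rw [h7, ← pow_add, show n+1-k+(k+k) = (n+1)+k by omega, pow_add]
        rcases Nat.eq_zero_or_pos k with hk0 | hk0
        · subst hk0
          rw [hsign]
          have ha : abelA 0 x = 1 := if_pos rfl
          rw [ha]
          simp only [Nat.sub_zero, Nat.cast_zero, add_zero, pow_zero, one_mul,
            Nat.choose_zero_right, Nat.cast_one, mul_one]
          rw [pow_succ]
          ring
        · have hkne : k ≠ 0 := Nat.pos_iff_ne_zero.mp hk0
          simp only [abelA, if_neg hkne]
          rw [hsign]
          have hpow : (x + (k:ℝ))^(k-1) * (x + (k:ℝ))^(n+1-k) = (x + (k:ℝ))^n := by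
            rw [← pow_add]
            congr 1
            omega
          calc (((n+1).choose k : ℝ) * (x * (x + (k:ℝ))^(k-1))) * ((-1:ℝ)^(n+1) * (-1:ℝ)^k * (x+(k:ℝ))^(n+1-k))
              = ((-1:ℝ)^(n+1) * x) * ((-1:ℝ)^k * ((n+1).choose k : ℝ) *
                  ((x + (k:ℝ))^(k-1) * (x + (k:ℝ))^(n+1-k))) := by ring
            _ = _ := by rw [hpow]
      rw [Finset.sum_congr rfl hterm, ← Finset.mul_sum]
      have hT := Tzero (n+1) n (Nat.lt_succ_self n) x
      unfold Tsum at hT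
      have : ∑ k ∈ range (n+1+1), (-1:ℝ)^k * ((n+1).choose k : ℝ) * (x + (k:ℝ))^n = 0 := hT
      rw [this, mul_zero]
    have hzero : L - R = 0 := by
      rw [hdeg] at heval ⊢
      rw [eval_C] at heval
      rw [heval, Polynomial.C_0]
    exact sub_eq_zero.mp hzero

lemma P2poly : ∀ n : ℕ, ∀ z : ℝ,
    (∑ k ∈ range (n+1), Polynomial.C (((n+1).choose (k+1) : ℝ) * ((k+1:ℕ):ℝ)^k) *
      (Polynomial.X + Polynomial.C (z + ((n-k : ℕ):ℝ)))^(n-k) : Polynomial ℝ)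
    = Polynomial.C ((n:ℝ)+1) * (Polynomial.X + Polynomial.C (z + ((n+1:ℕ):ℝ)))^n := by
  intro n
  induction n with
  | zero => intro z; simp
  | succ n ih =>
    intro z
    set L : Polynomial ℝ := ∑ k ∈ range (n+1+1), Polynomial.C (((n+1+1).choose (k+1) : ℝ) * ((k+1:ℕ):ℝ)^k) *
      (Polynomial.X + Polynomial.C (z + ((n+1-k : ℕ):ℝ)))^(n+1-k) with hL
    set R : Polynomial ℝ := Polynomial.C (((n+1:ℕ):ℝ)+1) * (Polynomial.X + Polynomial.C (z + ((n+1+1:ℕ):ℝ)))^(n+1) with hR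
    have hder : derivative (L - R) = 0 := by
      have hdL : derivative L = Polynomial.C (((n:ℝ)+2) * ((n:ℝ)+1)) *
          (Polynomial.X + Polynomial.C ((z+1) + ((n+1:ℕ):ℝ)))^n := by
        rw [hL, derivative_sum, Finset.sum_range_succ]
        simp only [derivative_C_mul, Polynomial.derivative_pow, derivative_X_add_C, Nat.sub_self,
          Nat.cast_zero, Polynomial.C_0, zero_mul, mul_one, mul_zero, add_zero]
        rw [show Polynomial.C (((n:ℝ)+2) * ((n:ℝ)+1)) *
            (Polynomial.X + Polynomial.C ((z+1) + ((n+1:ℕ):ℝ)))^n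
            = Polynomial.C ((n:ℝ)+2) * (Polynomial.C ((n:ℝ)+1) *
              (Polynomial.X + Polynomial.C ((z+1) + ((n+1:ℕ):ℝ)))^n) by
          rw [Polynomial.C_mul]; ring]
        rw [← ih (z+1), Finset.mul_sum]
        refine Finset.sum_congr rfl fun k hk => ?_
        have hk' : k ≤ n := by simpa [Nat.lt_succ_iff] using hk
        have h1 : n+1-k-1 = n-k := by omega
        have h2 : z + ((n+1-k : ℕ):ℝ) = (z+1) + ((n-k : ℕ):ℝ) := by
          rw [Nat.cast_sub (by omega), Nat.cast_sub hk']; push_cast; ring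
        have h3' : (n+1-k) * ((n+1+1).choose (k+1)) = (n+2) * ((n+1).choose (k+1)) := by
          have h := Nat.choose_mul_succ_eq (n+1) (k+1)
          have e : n+1+1-(k+1) = n+1-k := by omega
          rw [e] at h
          calc (n+1-k) * ((n+1+1).choose (k+1)) = (n+1+1).choose (k+1) * (n+1-k) := Nat.mul_comm _ _
            _ = (n+1).choose (k+1) * (n+1+1) := h.symm
            _ = (n+2) * ((n+1).choose (k+1)) := by ring
        have h3 : ((n+1-k : ℕ):ℝ) * ((n+1+1).choose (k+1) : ℝ) = ((n:ℝ)+2) * ((n+1).choose (k+1) : ℝ) := by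
          have := congrArg (Nat.cast (R := ℝ)) h3'
          push_cast at this
          rw [Nat.cast_sub (by omega : k ≤ n+1)] at this ⊢
          linarith [this]
        rw [h1, h2]
        calc Polynomial.C (((n+1+1).choose (k+1) : ℝ) * ((k+1:ℕ):ℝ)^k) *
              (Polynomial.C ((n+1-k : ℕ):ℝ) * (Polynomial.X + Polynomial.C ((z+1) + ((n-k:ℕ):ℝ)))^(n-k))
            = Polynomial.C ((((n+1-k : ℕ):ℝ) * ((n+1+1).choose (k+1) : ℝ)) * ((k+1:ℕ):ℝ)^k) *
              (Polynomial.X + Polynomial.C ((z+1) + ((n-k:ℕ):ℝ)))^(n-k) := by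
              simp only [Polynomial.C_mul]; ring
          _ = Polynomial.C ((((n:ℝ)+2) * ((n+1).choose (k+1) : ℝ)) * ((k+1:ℕ):ℝ)^k) *
              (Polynomial.X + Polynomial.C ((z+1) + ((n-k:ℕ):ℝ)))^(n-k) := by rw [h3]
          _ = Polynomial.C ((n:ℝ)+2) * (Polynomial.C (((n+1).choose (k+1) : ℝ) * ((k+1:ℕ):ℝ)^k) *
              (Polynomial.X + Polynomial.C ((z+1) + ((n-k:ℕ):ℝ)))^(n-k)) := by
              simp only [Polynomial.C_mul]; ring
      have hdR : derivative R = Polynomial.C (((n:ℝ)+2) * ((n:ℝ)+1)) *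
          (Polynomial.X + Polynomial.C ((z+1) + ((n+1:ℕ):ℝ)))^n := by
        rw [hR, derivative_C_mul, Polynomial.derivative_pow, derivative_X_add_C]
        have h4 : z + ((n+1+1:ℕ):ℝ) = (z+1) + ((n+1:ℕ):ℝ) := by push_cast; ring
        rw [h4, mul_one, Nat.add_sub_cancel]
        simp only [Polynomial.C_mul]
        push_cast
        ring
      rw [map_sub, hdL, hdR, sub_self]
    have hdeg : L - R = Polynomial.C ((L-R).coeff 0) :=
      Polynomial.eq_C_of_natDegree_eq_zero (Polynomial.natDegree_eq_zero_of_derivative_eq_zero hder)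
    have heval : (L - R).eval (-(z + ((n+1+1:ℕ):ℝ))) = 0 := by
      rw [eval_sub, hR]
      have hRz : (Polynomial.C (((n+1:ℕ):ℝ)+1) * (Polynomial.X + Polynomial.C (z + ((n+1+1:ℕ):ℝ)))^(n+1)).eval
          (-(z + ((n+1+1:ℕ):ℝ))) = 0 := by
        rw [eval_mul, eval_pow, eval_add, eval_X, eval_C, eval_C, neg_add_cancel,
          zero_pow (by omega : n+1 ≠ 0), mul_zero]
      rw [hL, hRz, sub_zero]
      simp only [eval_finset_sum, eval_mul, eval_pow, eval_add, eval_X, eval_C]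
      have hterm : ∀ k ∈ range (n+1+1), (((n+1+1).choose (k+1) : ℝ) * ((k+1:ℕ):ℝ)^k) *
          (-(z + ((n+1+1:ℕ):ℝ)) + (z + ((n+1-k : ℕ):ℝ)))^(n+1-k)
          = (-1:ℝ)^n * ((-1:ℝ)^(k+1) * ((n+1+1).choose (k+1) : ℝ) * ((0:ℝ) + ((k+1:ℕ):ℝ))^(n+1)) := by
        intro k hk
        have hk' : k ≤ n+1 := by simpa [Nat.lt_succ_iff] using hk
        have hbase : (-(z + ((n+1+1:ℕ):ℝ)) + (z + ((n+1-k : ℕ):ℝ))) = -((k+1:ℕ):ℝ) := by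
          rw [Nat.cast_sub hk']; push_cast; ring
        rw [hbase, neg_pow]
        have hsign : (-1:ℝ)^(n+1-k) = (-1:ℝ)^n * (-1:ℝ)^(k+1) := by
          have h6 : (-1:ℝ)^(k+k) = 1 := by
            rw [← two_mul, pow_mul]; norm_num
          have h7 : (-1:ℝ)^(n+1-k) = (-1:ℝ)^(n+1-k) * (-1:ℝ)^(k+k) := by rw [h6, mul_one]
          rw [h7, ← pow_add, show n+1-k+(k+k) = n+(k+1) by omega, pow_add]
        rw [hsign]
        have hpow : ((k+1:ℕ):ℝ)^k * ((k+1:ℕ):ℝ)^(n+1-k) = ((k+1:ℕ):ℝ)^(n+1) := by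
          rw [← pow_add]
          congr 1
          omega
        calc (((n+1+1).choose (k+1) : ℝ) * ((k+1:ℕ):ℝ)^k) * ((-1:ℝ)^n * (-1:ℝ)^(k+1) * ((k+1:ℕ):ℝ)^(n+1-k))
            = (-1:ℝ)^n * ((-1:ℝ)^(k+1) * ((n+1+1).choose (k+1) : ℝ) * (((k+1:ℕ):ℝ)^k * ((k+1:ℕ):ℝ)^(n+1-k))) := by
              ring
          _ = _ := by rw [hpow, zero_add]
      rw [Finset.sum_congr rfl hterm, ← Finset.mul_sum]
      have hT := Tzero (n+1+1) (n+1) (by omega) 0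
      unfold Tsum at hT
      rw [Finset.sum_range_succ'] at hT
      have h0 : ((-1:ℝ))^0 * (((n+1+1).choose 0 : ℕ) : ℝ) * ((0:ℝ) + ((0:ℕ):ℝ))^(n+1) = 0 := by
        norm_num
      rw [h0, add_zero] at hT
      rw [hT, mul_zero]
    have hzero : L - R = 0 := by
      rw [hdeg] at heval ⊢
      rw [eval_C] at heval
      rw [heval, Polynomial.C_0]
    exact sub_eq_zero.mp hzero


lemma Preal (x y : ℝ) (n : ℕ) :
    ∑ k ∈ Finset.range (n+1), (n.choose k : ℝ) * abelA k x * (y + ((n-k:ℕ):ℝ))^(n-k) = (x + y + n)^n := by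
  have h := congrArg (Polynomial.eval y) (Ppoly x n 0)
  simp only [Polynomial.eval_finset_sum, Polynomial.eval_mul, Polynomial.eval_pow,
    Polynomial.eval_add, Polynomial.eval_X, Polynomial.eval_C, zero_add, add_zero] at h
  rw [show x + y + (n:ℝ) = y + (x + (n:ℝ)) by ring]
  exact h

lemma P2real (y : ℝ) (n : ℕ) :
    ∑ k ∈ Finset.range (n+1), ((n+1).choose (k+1) : ℝ) * ((k+1:ℕ):ℝ)^k * (y + ((n-k:ℕ):ℝ))^(n-k)
      = ((n:ℝ)+1) * (y + ((n+1:ℕ):ℝ))^n := by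
  have h := congrArg (Polynomial.eval y) (P2poly n 0)
  simp only [Polynomial.eval_finset_sum, Polynomial.eval_mul, Polynomial.eval_pow,
    Polynomial.eval_add, Polynomial.eval_X, Polynomial.eval_C, zero_add, add_zero] at h
  exact h

lemma coeff_pow_eq_zero {f : PowerSeries ℝ} (hf : PowerSeries.constantCoeff f = 0) {m k : ℕ} (h : m < k) :
    PowerSeries.coeff m (f^k) = 0 := by
  obtain ⟨g, hg⟩ := PowerSeries.X_dvd_iff.mpr hf
  rw [hg, mul_pow, PowerSeries.coeff_X_pow_mul', if_neg (by omega)]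

lemma coeff_pexp_zero (f : PowerSeries ℝ) : PowerSeries.coeff 0 (pexp f) = 1 := by
  simp [pexp]

lemma pexp_rec {f : PowerSeries ℝ} (hf : PowerSeries.constantCoeff f = 0) (n : ℕ) :
    ((n:ℝ)+1) * PowerSeries.coeff (n+1) (pexp f)
      = ∑ j ∈ range (n+1), (((j:ℝ)+1) * PowerSeries.coeff (j+1) f) * PowerSeries.coeff (n-j) (pexp f) := by
  have key : ∀ k : ℕ, ((n:ℝ)+1) * PowerSeries.coeff (n+1) (f^(k+1))
      = ((k:ℝ)+1) * ∑ j ∈ range (n+1), PowerSeries.coeff (j+1) f * ((j:ℝ)+1) * PowerSeries.coeff (n-j) (f^k) := by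
    intro k
    have hd : ((n:ℝ)+1) * PowerSeries.coeff (n+1) (f^(k+1)) = PowerSeries.coeff n (PowerSeries.derivative ℝ (f^(k+1))) := by
      rw [PowerSeries.coeff_derivative]; ring
    rw [hd, Derivation.leibniz_pow, Nat.add_sub_cancel, smul_eq_mul, map_nsmul, nsmul_eq_mul,
      mul_comm (f^k) _, PowerSeries.coeff_mul,
      Finset.Nat.sum_antidiagonal_eq_sum_range_succ_mk]
    push_cast
    refine congrArg _ (Finset.sum_congr rfl fun j _ => ?_)
    rw [PowerSeries.coeff_derivative]
  calc ((n:ℝ)+1) * PowerSeries.coeff (n+1) (pexp f)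
      = ∑ k ∈ range (n+1+1), ((n:ℝ)+1) * PowerSeries.coeff (n+1) (f^k) / (k.factorial : ℝ) := by
        rw [pexp, coeff_mk, Finset.mul_sum]
        exact Finset.sum_congr rfl fun k _ => by ring
    _ = ∑ k ∈ range (n+1), ((n:ℝ)+1) * PowerSeries.coeff (n+1) (f^(k+1)) / ((k+1).factorial : ℝ) := by
        rw [Finset.sum_range_succ']
        simp
    _ = ∑ k ∈ range (n+1), (∑ j ∈ range (n+1), PowerSeries.coeff (j+1) f * ((j:ℝ)+1) * PowerSeries.coeff (n-j) (f^k)) / (k.factorial : ℝ) := by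
        refine Finset.sum_congr rfl fun k _ => ?_
        rw [show ((n:ℝ)+1) * PowerSeries.coeff (n+1) (f^(k+1)) = ((k:ℝ)+1) * ∑ j ∈ range (n+1),
          PowerSeries.coeff (j+1) f * ((j:ℝ)+1) * PowerSeries.coeff (n-j) (f^k) from key k]
        rw [Nat.factorial_succ, Nat.cast_mul]
        rw [show ((k+1:ℕ):ℝ) = (k:ℝ)+1 by push_cast; ring]
        rw [mul_div_mul_left _ _ (by positivity : (k:ℝ)+1 ≠ 0)]
    _ = ∑ j ∈ range (n+1), ∑ k ∈ range (n+1), (PowerSeries.coeff (j+1) f * ((j:ℝ)+1)) * (PowerSeries.coeff (n-j) (f^k) / (k.factorial : ℝ)) := by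
        rw [Finset.sum_comm]
        refine Finset.sum_congr rfl fun k _ => ?_
        rw [Finset.sum_div]
        exact Finset.sum_congr rfl fun j _ => by ring
    _ = ∑ j ∈ range (n+1), (((j:ℝ)+1) * PowerSeries.coeff (j+1) f) * PowerSeries.coeff (n-j) (pexp f) := by
        refine Finset.sum_congr rfl fun j hj => ?_
        rw [← Finset.mul_sum]
        have hsub : range (n-j+1) ⊆ range (n+1) := Finset.range_subset_range.mpr (by omega)
        have hz : ∀ k ∈ range (n+1), k ∉ range (n-j+1) → PowerSeries.coeff (n-j) (f^k) / (k.factorial : ℝ) = 0 := by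
          intro k _ hk
          rw [coeff_pow_eq_zero hf (by simp at hk; omega), zero_div]
        rw [← Finset.sum_subset hsub hz]
        rw [pexp, coeff_mk]
        ring

lemma constW : PowerSeries.constantCoeff (treeW ℝ) = 0 := by
  rw [← PowerSeries.coeff_zero_eq_constantCoeff]
  simp [treeW]

lemma constsmul (x : ℝ) : PowerSeries.constantCoeff (x • treeW ℝ) = 0 := by
  have h0 : PowerSeries.coeff 0 (treeW ℝ) = 0 := by simp [treeW]
  rw [← PowerSeries.coeff_zero_eq_constantCoeff, map_smul, h0, smul_zero]

lemma coeff_W_succ (j : ℕ) : PowerSeries.coeff (j+1) (treeW ℝ) = ((j+1:ℕ):ℝ)^j / (((j+1).factorial:ℕ) : ℝ) := by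
  simp [treeW]

lemma coeff_smulW (x : ℝ) (j : ℕ) :
    PowerSeries.coeff (j+1) (x • treeW ℝ) = x * (((j+1:ℕ):ℝ)^j / (((j+1).factorial:ℕ) : ℝ)) := by
  rw [map_smul, coeff_W_succ, smul_eq_mul]

lemma div_fact_mul_div_fact {n k : ℕ} (hk : k ≤ n) (a b : ℝ) :
    a / (k.factorial:ℝ) * (b / ((n-k).factorial:ℝ)) = (n.choose k : ℝ) * a * b / (n.factorial:ℝ) := by
  have h := Nat.choose_mul_factorial_mul_factorial hk
  have h' : ((n.choose k : ℕ):ℝ) * (k.factorial:ℝ) * ((n-k).factorial:ℝ) = (n.factorial:ℝ) := by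
    exact_mod_cast congrArg (Nat.cast (R := ℝ)) h
  have hk0 : (k.factorial:ℝ) ≠ 0 := Nat.cast_ne_zero.mpr (Nat.factorial_ne_zero k)
  have hnk0 : ((n-k).factorial:ℝ) ≠ 0 := Nat.cast_ne_zero.mpr (Nat.factorial_ne_zero _)
  have hn0 : (n.factorial:ℝ) ≠ 0 := Nat.cast_ne_zero.mpr (Nat.factorial_ne_zero n)
  field_simp
  linear_combination (-(a*b)) * h'

lemma Pshift (x : ℝ) (m : ℕ) :
    ∑ j ∈ Finset.range (m+1), (m.choose j : ℝ) * (((j+1:ℕ):ℝ))^j * abelA (m-j) x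
      = (x + ((m+1:ℕ):ℝ))^m := by
  have h := Preal x 1 m
  have h2 : ∑ j ∈ Finset.range (m+1), (m.choose j : ℝ) * (((j+1:ℕ):ℝ))^j * abelA (m-j) x
      = ∑ j ∈ Finset.range (m+1), (m.choose (m-j) : ℝ) * abelA (m-j) x * (1 + ((m-(m-j):ℕ):ℝ))^(m-(m-j)) := by
    refine Finset.sum_congr rfl fun j hj => ?_
    have hj' : j ≤ m := by simp at hj; omega
    rw [Nat.choose_symm hj', Nat.sub_sub_self hj']
    push_cast
    ring
  have h3 := Finset.sum_range_reflect
    (fun k => (m.choose k : ℝ) * abelA k x * (1 + ((m-k:ℕ):ℝ))^(m-k)) (m+1)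
  simp only [Nat.add_sub_cancel] at h3
  rw [h2, h3, h]
  congr 1
  push_cast
  ring

lemma P2shift (m : ℕ) :
    ∑ j ∈ Finset.range (m+1), ((m+1).choose (j+1) : ℝ) * (((j+1:ℕ):ℝ))^j * (((m-j:ℕ):ℝ))^(m-j)
      = ((m+1:ℕ):ℝ)^(m+1) := by
  have h := P2real 0 m
  simp only [zero_add] at h
  rw [h]
  push_cast
  ring

lemma hE (x : ℝ) : ∀ n, PowerSeries.coeff n (pexp (x • treeW ℝ)) = abelA n x / ((n.factorial:ℕ) : ℝ) := by
  intro n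
  induction n using Nat.strong_induction_on with
  | _ n ih =>
    match n, ih with
    | 0, _ => rw [coeff_pexp_zero]; simp [abelA]
    | (m+1), ih =>
      have hrec := pexp_rec (constsmul x) m
      have hco : ∀ j ∈ Finset.range (m+1),
          (((j:ℝ)+1) * PowerSeries.coeff (j+1) (x • treeW ℝ)) * PowerSeries.coeff (m-j) (pexp (x • treeW ℝ))
          = x * ((m.choose j : ℝ) * (((j+1:ℕ):ℝ))^j * abelA (m-j) x / ((m.factorial:ℕ):ℝ)) := by
        intro j hj
        have hj' : j ≤ m := by simp at hj; omega
        rw [coeff_smulW, ih (m-j) (by omega)]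
        have hfac : (((j+1).factorial:ℕ):ℝ) = ((j:ℝ)+1) * ((j.factorial:ℕ):ℝ) := by
          rw [Nat.factorial_succ]; push_cast; ring
        rw [hfac]
        have hcancel : ((j:ℝ)+1) * (x * ((((j+1:ℕ):ℝ))^j / (((j:ℝ)+1) * ((j.factorial:ℕ):ℝ))))
            = x * ((((j+1:ℕ):ℝ))^j / ((j.factorial:ℕ):ℝ)) := by
          have hj1 : ((j:ℝ)+1) ≠ 0 := by positivity
          field_simp
        rw [hcancel, mul_assoc, div_fact_mul_div_fact hj']
      rw [Finset.sum_congr rfl hco, ← Finset.mul_sum, ← Finset.sum_div, Pshift] at hrec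
      have hm1 : ((m:ℝ)+1) ≠ 0 := by positivity
      have hmf : ((m.factorial:ℕ):ℝ) ≠ 0 := Nat.cast_ne_zero.mpr (Nat.factorial_ne_zero m)
      have habel : abelA (m+1) x = x * (x + ((m+1:ℕ):ℝ))^m := by
        rw [show abelA (m+1) x = x * (x + ((m+1:ℕ):ℝ))^(m+1-1) from if_neg (by omega)]
        rw [Nat.add_sub_cancel]
      rw [habel]
      have hfac2 : (((m+1).factorial:ℕ):ℝ) = ((m:ℝ)+1) * ((m.factorial:ℕ):ℝ) := by
        rw [Nat.factorial_succ]; push_cast; ring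
      rw [hfac2]
      rw [eq_div_iff (by exact mul_ne_zero hm1 hmf)]
      field_simp at hrec ⊢
      linarith [hrec]

lemma hV : (1 - treeW ℝ)⁻¹ = PowerSeries.mk (fun n => ((n:ℕ):ℝ)^n / ((n.factorial:ℕ):ℝ)) := by
  have hc : PowerSeries.constantCoeff (1 - treeW ℝ) ≠ 0 := by
    rw [map_sub, map_one, constW, sub_zero]; exact one_ne_zero
  rw [PowerSeries.inv_eq_iff_mul_eq_one hc]
  rw [mul_sub, mul_one,
    show PowerSeries.mk (fun n => ((n:ℕ):ℝ)^n / ((n.factorial:ℕ):ℝ)) * treeW ℝ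
      = treeW ℝ * PowerSeries.mk (fun n => ((n:ℕ):ℝ)^n / ((n.factorial:ℕ):ℝ)) from mul_comm _ _]
  ext n
  rw [map_sub]
  cases n with
  | zero =>
    rw [PowerSeries.coeff_mul]
    simp [treeW]
  | succ m =>
    rw [PowerSeries.coeff_mul, Finset.Nat.sum_antidiagonal_eq_sum_range_succ_mk,
      Finset.sum_range_succ']
    have h0 : PowerSeries.coeff 0 (treeW ℝ) * PowerSeries.coeff (m+1-0)
        (PowerSeries.mk (fun n => ((n:ℕ):ℝ)^n / ((n.factorial:ℕ):ℝ))) = 0 := by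
      simp [treeW]
    rw [h0, add_zero]
    have hco : ∀ j ∈ Finset.range (m+1), PowerSeries.coeff (j+1) (treeW ℝ) * PowerSeries.coeff (m+1-(j+1))
        (PowerSeries.mk (fun n => ((n:ℕ):ℝ)^n / ((n.factorial:ℕ):ℝ)))
        = ((m+1).choose (j+1) : ℝ) * (((j+1:ℕ):ℝ))^j * (((m-j:ℕ):ℝ))^(m-j) / (((m+1).factorial:ℕ):ℝ) := by
      intro j hj
      have hj' : j+1 ≤ m+1 := by simp at hj; omega
      rw [coeff_W_succ, coeff_mk]
      have := div_fact_mul_div_fact hj' ((((j+1:ℕ):ℝ))^j) ((((m+1-(j+1):ℕ):ℝ))^(m+1-(j+1)))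
      simp only [Nat.succ_sub_succ] at this ⊢
      rw [this]
    rw [Finset.sum_congr rfl hco, ← Finset.sum_div, P2shift]
    rw [PowerSeries.coeff_mk, PowerSeries.coeff_one, if_neg (by omega)]
    ring

theorem stmt0 (x : ℝ) :
    pexp (x • treeW ℝ) * (1 - treeW ℝ)⁻¹
      = PowerSeries.mk fun n => ((n : ℝ) + x) ^ n / (n.factorial : ℝ) := by
  rw [hV]
  ext n
  rw [PowerSeries.coeff_mul, Finset.Nat.sum_antidiagonal_eq_sum_range_succ_mk, PowerSeries.coeff_mk]
  have hco : ∀ k ∈ Finset.range (n+1), PowerSeries.coeff k (pexp (x • treeW ℝ)) * PowerSeries.coeff (n-k)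
      (PowerSeries.mk (fun n => ((n:ℕ):ℝ)^n / ((n.factorial:ℕ):ℝ)))
      = (n.choose k : ℝ) * abelA k x * (((n-k:ℕ):ℝ))^(n-k) / ((n.factorial:ℕ):ℝ) := by
    intro k hk
    have hk' : k ≤ n := by simp at hk; omega
    rw [hE, coeff_mk, div_fact_mul_div_fact hk']
  rw [Finset.sum_congr rfl hco, ← Finset.sum_div]
  have h := Preal x 0 n
  simp only [add_zero, zero_add] at h
  rw [h]
  congr 1
  ring
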